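/- Let h be strictly increasing with h(i) ≥ 1 and suppose h(n+1) > (n+2)·h(n) + 1 for all n. If α = Σ_{i=0}^∞ P_i^(-h(i)) were rational with denominator q whose prime factorization has P_i-exponent q_i, then for n with P_n greater than every prime factor of q and h(n) > q_0 + ... + q_n, the inequalities 1/Π_{i=0}^n P_i^(h(i)+q_i) ≤ α − α_n ≤ P_{n+1}^(−h(n+1)+1) lead to h(n+1) ≤ (n+2)h(n) + 1, a contradiction; hence α is irrational. -/

import Mathlib

/-- `P i` is the `i`-th prime number (`P 0 = 2`). -/
noncomputable def P (i : ℕ) : ℕ := Nat.nth Nat.Prime i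

/-- If `h` is strictly increasing with `h i ≥ 1` and `h (n+1) > (n+2)·h n + 1` for all
`n`, then `α = Σ_{i=0}^∞ P_i^(-h(i))` is irrational. -/
theorem alpha_irrational_weak
    (h : ℕ → ℕ) (hmono : StrictMono h) (hpos : ∀ i, 1 ≤ h i)
    (hgrow : ∀ n, (n + 2) * h n + 1 < h (n + 1)) :
    Irrational (∑' i : ℕ, (P i : ℝ) ^ (-(h i : ℤ))) := by
  have hPprime : ∀ i, (P i).Prime := Nat.prime_nth_prime
  have hP2 : ∀ i, 2 ≤ P i := fun i => (hPprime i).two_le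
  have hPmono : StrictMono P := Nat.nth_strictMono Nat.infinite_setOf_prime
  set f : ℕ → ℝ := fun i => (P i : ℝ) ^ (-(h i : ℤ)) with hf
  have hfe : ∀ i, f i = ((P i : ℝ) ^ (h i))⁻¹ := fun i => by
    simp [hf, zpow_neg, zpow_natCast]
  have hfpos : ∀ i, 0 < f i := fun i => by
    rw [hfe]
    have : (0:ℝ) < (P i : ℝ) := by exact_mod_cast (hPprime i).pos
    positivity
  have hh : ∀ i, i + 1 ≤ h i := by
    intro i; induction i with
    | zero => exact hpos 0
    | succ n ih => exact Nat.succ_le_of_lt (lt_of_le_of_lt ih (hmono (Nat.lt_succ_self n)))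
  have hfle : ∀ i, f i ≤ (1/2:ℝ)^i * (1/2) := by
    intro i
    rw [hfe, ← pow_succ, one_div, inv_pow]
    apply inv_anti₀ (by positivity)
    calc (2:ℝ)^(i+1) ≤ (2:ℝ)^(h i) := by
          exact pow_le_pow_right₀ (by norm_num) (hh i)
      _ ≤ (P i : ℝ)^(h i) := by
          exact pow_le_pow_left₀ (by norm_num) (by exact_mod_cast hP2 i) _
  have hsum : Summable f :=
    Summable.of_nonneg_of_le (fun i => (hfpos i).le) hfle
      ((summable_geometric_of_lt_one (by norm_num) (by norm_num)).mul_right _)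
  -- suppose rational
  rintro ⟨r, hr⟩
  set α : ℝ := ∑' i : ℕ, f i with hα
  set q : ℕ := r.den with hq
  have hq1 : 1 ≤ q := r.pos
  set n : ℕ := q with hn
  set D : ℕ := ∏ i ∈ Finset.range (n+1), P i ^ h i with hD
  have hDpos : 0 < D := Finset.prod_pos fun i _ => pow_pos (hPprime i).pos _
  set M : ℕ := ∑ i ∈ Finset.range (n+1), D / (P i ^ h i) with hM
  set αn : ℝ := ∑ i ∈ Finset.range (n+1), f i with hαn
  -- D * αn = M
  have hDαn : (D:ℝ) * αn = (M:ℝ) := by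
    rw [hM, hαn, Nat.cast_sum, Finset.mul_sum]
    apply Finset.sum_congr rfl
    intro i hi
    have hdvd : P i ^ h i ∣ D := Finset.dvd_prod_of_mem _ hi
    have hne : ((P i ^ h i : ℕ) : ℝ) ≠ 0 := by
      exact_mod_cast (pow_pos (hPprime i).pos (h i)).ne'
    rw [Nat.cast_div hdvd hne, hfe i]
    push_cast
    ring
  -- tail
  set T : ℝ := ∑' i : ℕ, f (i + (n+1)) with hT
  have hsplit : αn + T = α := Summable.sum_add_tsum_nat_add (n+1) hsum
  have hsumT : Summable fun i => f (i + (n+1)) := (summable_nat_add_iff (n+1)).2 hsum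
  have hTpos : 0 < T :=
    Summable.tsum_pos hsumT (fun i => (hfpos _).le) 0 (hfpos _)
  -- shift bound on h
  have hshift : ∀ i, h (n+1) + i ≤ h (i + (n+1)) := by
    intro i; induction i with
    | zero => simp
    | succ k ih =>
        have : h (k + (n+1)) < h (k + 1 + (n+1)) := hmono (by omega)
        omega
  -- tail term bound
  have hkey : ∀ i : ℕ, f (i + (n+1)) ≤ ((P (n+1) : ℝ) ^ (h (n+1)))⁻¹ * (1/2:ℝ)^i := by
    intro i
    rw [hfe]
    have hnat : P (n+1) ^ h (n+1) * 2 ^ i ≤ P (i + (n+1)) ^ h (i + (n+1)) := by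
      calc P (n+1) ^ h (n+1) * 2 ^ i ≤ P (n+1) ^ h (n+1) * P (n+1) ^ i := by
            exact Nat.mul_le_mul_left _ (Nat.pow_le_pow_left (hP2 _) i)
        _ = P (n+1) ^ (h (n+1) + i) := by rw [pow_add]
        _ ≤ P (i + (n+1)) ^ (h (n+1) + i) :=
            Nat.pow_le_pow_left (hPmono.monotone (by omega)) _
        _ ≤ P (i + (n+1)) ^ h (i + (n+1)) :=
            Nat.pow_le_pow_right (hPprime _).pos (hshift i)
    have hnat' : ((P (n+1) : ℝ) ^ h (n+1) * 2 ^ i) ≤ (P (i + (n+1)) : ℝ) ^ h (i + (n+1)) := by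
      exact_mod_cast hnat
    have hpos1 : (0:ℝ) < (P (n+1) : ℝ) ^ h (n+1) * 2 ^ i := by
      have : (0:ℝ) < (P (n+1) : ℝ) := by exact_mod_cast (hPprime _).pos
      positivity
    calc ((P (i + (n+1)) : ℝ) ^ h (i + (n+1)))⁻¹
        ≤ ((P (n+1) : ℝ) ^ h (n+1) * 2 ^ i)⁻¹ := inv_anti₀ hpos1 hnat'
      _ = ((P (n+1) : ℝ) ^ h (n+1))⁻¹ * (1/2:ℝ)^i := by
          rw [mul_inv]
          congr 1
          rw [one_div, inv_pow]
  -- tail sum bound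
  have hTle : T ≤ ((P (n+1) : ℝ) ^ (h (n+1)))⁻¹ * 2 := by
    have hgsum : Summable fun i : ℕ => ((P (n+1) : ℝ) ^ (h (n+1)))⁻¹ * (1/2:ℝ)^i :=
      (summable_geometric_of_lt_one (by norm_num) (by norm_num)).mul_left _
    calc T ≤ ∑' i : ℕ, ((P (n+1) : ℝ) ^ (h (n+1)))⁻¹ * (1/2:ℝ)^i :=
          Summable.tsum_le_tsum hkey hsumT hgsum
      _ = ((P (n+1) : ℝ) ^ (h (n+1)))⁻¹ * ∑' i : ℕ, (1/2:ℝ)^i := tsum_mul_left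
      _ = ((P (n+1) : ℝ) ^ (h (n+1)))⁻¹ * 2 := by
          rw [tsum_geometric_of_lt_one (by norm_num) (by norm_num)]
          norm_num
  -- q * α = r.num
  have hqα : (q:ℝ) * α = (r.num : ℝ) := by
    rw [← hr, Rat.cast_def]
    field_simp
    exact mul_comm _ _
  -- integrality
  set m : ℤ := r.num * D - q * M with hm
  have hmR : (m:ℝ) = (q:ℝ) * D * T := by
    have : (q:ℝ) * D * T = (q * α) * D - q * ((D:ℝ) * αn) := by
      rw [← hsplit]; ring
    rw [this, hqα, hDαn, hm]
    push_cast
    ring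
  have hm1 : (1:ℝ) ≤ (q:ℝ) * D * T := by
    have hmpos : (0:ℝ) < (m:ℝ) := by
      rw [hmR]
      have hq0 : (0:ℝ) < (q:ℝ) := by exact_mod_cast hq1
      have hD0 : (0:ℝ) < (D:ℝ) := by exact_mod_cast hDpos
      positivity
    have : (1:ℤ) ≤ m := by exact_mod_cast hmpos
    rw [← hmR]; exact_mod_cast this
  -- main inequality in ℝ: P(n+1)^h(n+1) ≤ 2*q*D
  have hPpow : (0:ℝ) < (P (n+1) : ℝ) ^ (h (n+1)) := by
    have : (0:ℝ) < (P (n+1) : ℝ) := by exact_mod_cast (hPprime _).pos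
    positivity
  have hmainR : ((P (n+1) : ℝ) ^ (h (n+1))) ≤ 2 * q * D := by
    have h2 : (1:ℝ) ≤ (q:ℝ) * D * (((P (n+1) : ℝ) ^ (h (n+1)))⁻¹ * 2) := by
      refine le_trans hm1 ?_
      have hq0 : (0:ℝ) ≤ (q:ℝ) * D := by positivity
      exact mul_le_mul_of_nonneg_left hTle hq0
    have h3 := mul_le_mul_of_nonneg_left h2 hPpow.le
    rw [mul_one] at h3
    calc (P (n+1) : ℝ) ^ (h (n+1))
        ≤ (P (n+1) : ℝ) ^ (h (n+1)) * ((q:ℝ) * D * (((P (n+1) : ℝ) ^ (h (n+1)))⁻¹ * 2)) := h3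
      _ = 2 * q * D := by
          field_simp
  have hmain : P (n+1) ^ (h (n+1)) ≤ 2 * q * D := by exact_mod_cast hmainR
  -- bound D
  have hDle : D ≤ P (n+1) ^ ((n+1) * h n) := by
    calc D ≤ ∏ _i ∈ Finset.range (n+1), P (n+1) ^ h n := by
          apply Finset.prod_le_prod'
          intro i hi
          simp only [Finset.mem_range] at hi
          calc P i ^ h i ≤ P (n+1) ^ h i :=
                Nat.pow_le_pow_left (hPmono.monotone (by omega)) _
            _ ≤ P (n+1) ^ h n :=
                Nat.pow_le_pow_right (hPprime _).pos (hmono.monotone (by omega))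
      _ = P (n+1) ^ ((n+1) * h n) := by
          rw [Finset.prod_const, Finset.card_range, ← pow_mul, mul_comm]
  -- bound 2*q
  have hqle : 2 * q ≤ P (n+1) ^ h n := by
    calc 2 * q ≤ 2 ^ (n+1) := by
          have : q < 2 ^ q := Nat.lt_two_pow_self
          have h2 : 2 * q ≤ 2 * 2 ^ q := by omega
          calc 2 * q ≤ 2 * 2 ^ q := h2
            _ = 2 ^ (q + 1) := by ring
            _ = 2 ^ (n + 1) := by rw [hn]
      _ ≤ 2 ^ h n := Nat.pow_le_pow_right (by norm_num) (hh n)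
      _ ≤ P (n+1) ^ h n := Nat.pow_le_pow_left (hP2 _) _
  -- final contradiction
  have hfinal : P (n+1) ^ (h (n+1)) ≤ P (n+1) ^ ((n+2) * h n) := by
    calc P (n+1) ^ (h (n+1)) ≤ 2 * q * D := hmain
      _ ≤ P (n+1) ^ h n * P (n+1) ^ ((n+1) * h n) := Nat.mul_le_mul hqle hDle
      _ = P (n+1) ^ ((n+2) * h n) := by rw [← pow_add]; ring_nf
  have hexp : h (n+1) ≤ (n+2) * h n :=
    (pow_le_pow_iff_right₀ (hP2 (n+1))).1 hfinal
  have := hgrow n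
  omega
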